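/- arXiv:1904.10759 — 4 statements merged into one kernel-verified Lean document; each statement's English description precedes it below -/
import Mathlib

section
/- Insertion preserves Cantor normal form: if a and b are trees with isCNF a and isCNF b, then isCNF (insert a b). -/
namespace CNFOrd

/-- Binary trees: `omega a b` represents the ordinal `ω^a + b`. -/
inductive T : Type
  | zero : T
  | omega : T → T → T
  deriving DecidableEq

namespace T

/-- The strict order on trees. -/
inductive Lt : T → T → Prop
  | lt1 {a b : T} : Lt zero (omega a b)
  | lt2 {a b c d : T} : Lt a c → Lt (omega a b) (omega c d)
  | lt3 {a b c d : T} : a = c → Lt b d → Lt (omega a b) (omega c d)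

/-- `a ≥ b` means `b < a` or `a = b`. -/
def Ge (a b : T) : Prop := Lt b a ∨ a = b

/-- First exponent of a tree. -/
def fst : T → T
  | zero => zero
  | omega a _ => a

/-- The predicate of being in Cantor normal form. -/
inductive isCNF : T → Prop
  | zero : isCNF zero
  | omega {a b : T} : isCNF a → isCNF b → Ge a (fst b) → isCNF (omega a b)

/-- Decidability of the strict order. -/
def decLt : (a b : T) → Decidable (Lt a b)
  | _, zero => isFalse fun h => nomatch h
  | zero, omega _ _ => isTrue .lt1
  | omega a b, omega c d =>
    match decLt a c with
    | isTrue h => isTrue (.lt2 h)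
    | isFalse h1 =>
      if he : a = c then
        match decLt b d with
        | isTrue h2 => isTrue (.lt3 he h2)
        | isFalse h2 => isFalse fun h => by
            cases h with
            | lt2 h' => exact h1 h'
            | lt3 _ h2' => exact h2 h2'
      else isFalse fun h => by
            cases h with
            | lt2 h' => exact h1 h'
            | lt3 he' _ => exact he he'

instance : ∀ a b : T, Decidable (Lt a b) := decLt

/-- List insertion. -/
def insert (a : T) : T → T
  | zero => omega a zero
  | omega b c => if Lt a b then omega b (insert a c) else omega a (omega b c)

/-- The permutation congruence: smallest equivalence relation which is a
congruence for `omega` and satisfies the swap rule. -/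
inductive Perm : T → T → Prop
  | refl (a : T) : Perm a a
  | symm {a b : T} : Perm a b → Perm b a
  | trans {a b c : T} : Perm a b → Perm b c → Perm a c
  | congr {a a' b b' : T} : Perm a a' → Perm b b' → Perm (omega a b) (omega a' b')
  | swap (a b c : T) : Perm (omega a (omega b c)) (omega b (omega a c))

instance permSetoid : Setoid T := ⟨Perm, ⟨Perm.refl, Perm.symm, Perm.trans⟩⟩

/-- Hessenberg sum. -/
def oplus : T → T → T
  | zero, y => y
  | omega a b, y => omega a (oplus b y)

/-- Ordinal addition. -/
def add : T → T → T
  | zero, b => b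
  | a, zero => a
  | omega a c, omega b d => if Lt a b then omega b d else omega a (add c (omega b d))

/-- Ordinal multiplication. -/
def mul : T → T → T
  | zero, _ => zero
  | _, zero => zero
  | a, omega zero d => add a (mul a d)
  | omega a c, omega b d => omega (add a b) (mul (omega a c) d)

end T

end CNFOrd

open CNFOrd T in
theorem lt_trichotomy' : ∀ a b : T, Lt a b ∨ a = b ∨ Lt b a := by
  intro a
  induction a with
  | zero =>
    intro b; cases b with
    | zero => exact Or.inr (Or.inl rfl)
    | omega c d => exact Or.inl .lt1
  | omega a c iha ihc =>
    intro b; cases b with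
    | zero => exact Or.inr (Or.inr .lt1)
    | omega b d =>
      rcases iha b with h | h | h
      · exact Or.inl (.lt2 h)
      · rcases ihc d with h2 | h2 | h2
        · exact Or.inl (.lt3 h h2)
        · subst h; subst h2; exact Or.inr (Or.inl rfl)
        · exact Or.inr (Or.inr (.lt3 h.symm h2))
      · exact Or.inr (Or.inr (.lt2 h))

open CNFOrd T in
theorem fst_insert (a c : T) : fst (T.insert a c) = a ∨ fst (T.insert a c) = fst c := by
  cases c with
  | zero => exact Or.inl rfl
  | omega d e =>
    simp only [T.insert]
    by_cases h : Lt a d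
    · simp [h, fst]
    · simp [h, fst]

open CNFOrd T in
/-- insertion preserves Cantor normal form. -/
theorem isCNF_insert : ∀ a b : T, isCNF a → isCNF b → isCNF (T.insert a b) := by
  intro a b ha hb
  induction hb with
  | zero =>
    refine .omega ha .zero ?_
    cases a with
    | zero => exact Or.inr rfl
    | omega x y => exact Or.inl .lt1
  | @omega p q hp hq hge ih1 ih2 =>
    simp only [T.insert]
    by_cases h : Lt a p
    · simp only [h, if_true]
      refine .omega hp ih2 ?_
      rcases fst_insert a q with he | he
      · rw [he]; exact Or.inl h
      · rw [he]; exact hge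
    · simp only [h, if_false]
      refine .omega ha (.omega hp hq hge) ?_
      rcases lt_trichotomy' a p with h1 | h1 | h1
      · exact absurd h1 h
      · exact Or.inr h1
      · exact Or.inl h1
end

section
/- The three ordinal notation systems are equivalent (Theorems 3.3 and 3.5): the map sending a tree in Cantor normal form to its ~-equivalence class is a bijection between the subtype {t : Tree // isCNF t} and the quotient Tree ⧸ ~; equivalently, every ~-equivalence class of trees contains exactly one tree in Cantor normal form. -/
namespace CNFOrd.T

theorem lt_irrefl : ∀ a : T, ¬ Lt a a := by
  intro a
  induction a with
  | zero => intro h; cases h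
  | omega a b iha ihb =>
    intro h
    cases h with
    | lt2 h => exact iha h
    | lt3 _ h => exact ihb h

theorem lt_trans : ∀ {a b c : T}, Lt a b → Lt b c → Lt a c := by
  intro a b c h1
  induction h1 generalizing c with
  | lt1 => intro h2; cases h2 with
    | lt2 _ => exact .lt1
    | lt3 _ _ => exact .lt1
  | lt2 h ih =>
    intro h2
    cases h2 with
    | lt2 h' => exact .lt2 (ih h')
    | lt3 he h' => exact .lt2 (he ▸ h)
  | lt3 he h ih =>
    intro h2
    cases h2 with
    | lt2 h' => exact .lt2 (he ▸ h')
    | lt3 he' h' => exact .lt3 (he.trans he') (ih h')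

theorem lt_asymm {a b : T} (h : Lt a b) : ¬ Lt b a := fun h' =>
  lt_irrefl a (lt_trans h h')

theorem lt_total : ∀ a b : T, Lt a b ∨ a = b ∨ Lt b a := by
  intro a
  induction a with
  | zero =>
    intro b; cases b with
    | zero => exact Or.inr (Or.inl rfl)
    | omega c d => exact Or.inl .lt1
  | omega a b iha ihb =>
    intro x; cases x with
    | zero => exact Or.inr (Or.inr .lt1)
    | omega c d =>
      rcases iha c with h | h | h
      · exact Or.inl (.lt2 h)
      · rcases ihb d with h' | h' | h'
        · exact Or.inl (.lt3 h h')
        · exact Or.inr (Or.inl (by rw [h, h']))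
        · exact Or.inr (Or.inr (.lt3 h.symm h'))
      · exact Or.inr (Or.inr (.lt2 h))

theorem not_lt_iff {a b : T} : ¬ Lt a b ↔ (Lt b a ∨ a = b) := by
  constructor
  · intro h
    rcases lt_total a b with h' | h' | h'
    · exact absurd h' h
    · exact Or.inr h'
    · exact Or.inl h'
  · rintro (h | rfl)
    · exact lt_asymm h
    · exact lt_irrefl a

/-- Normalization by insertion sort. -/
def norm : T → T
  | zero => zero
  | omega a b => T.insert (norm a) (norm b)

theorem fst_insert (a t : T) : fst (T.insert a t) = a ∨ fst (T.insert a t) = fst t := by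
  cases t with
  | zero => left; rfl
  | omega b c =>
    unfold T.insert
    split
    · right; rfl
    · left; rfl

theorem ge_zero (a : T) : Ge a zero := by
  cases a with
  | zero => exact Or.inr rfl
  | omega b c => exact Or.inl .lt1

theorem insert_cnf {a t : T} (ha : isCNF a) (ht : isCNF t) : isCNF (T.insert a t) := by
  induction ht with
  | zero => exact .omega ha .zero (ge_zero a)
  | @omega b c hb hc hge ihb ihc =>
    unfold T.insert
    split
    · rename_i hab
      refine .omega hb ihc ?_
      rcases fst_insert a c with h | h
      · rw [h]; exact Or.inl hab
      · rw [h]; exact hge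
    · rename_i hab
      exact .omega ha (.omega hb hc hge) (not_lt_iff.mp hab)

theorem norm_cnf (t : T) : isCNF (norm t) := by
  induction t with
  | zero => exact .zero
  | omega a b iha ihb => exact insert_cnf iha ihb

theorem norm_eq_of_cnf {t : T} (h : isCNF t) : norm t = t := by
  induction h with
  | zero => rfl
  | @omega a b ha hb hge iha ihb =>
    show T.insert (norm a) (norm b) = omega a b
    rw [iha, ihb]
    cases b with
    | zero => rfl
    | omega c d =>
      unfold T.insert
      rw [if_neg]
      rcases hge with h | h
      · exact lt_asymm h
      · rw [h]; exact lt_irrefl c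

theorem insert_perm (a t : T) : Perm (T.insert a t) (omega a t) := by
  induction t with
  | zero => exact .refl _
  | omega b c ihb ihc =>
    unfold T.insert
    split
    · exact .trans (.congr (.refl b) ihc) (.swap b a c)
    · exact .refl _

theorem norm_perm (t : T) : Perm (norm t) t := by
  induction t with
  | zero => exact .refl _
  | omega a b iha ihb =>
    exact .trans (insert_perm (norm a) (norm b)) (.congr iha ihb)

theorem insert_zero (a : T) : T.insert a zero = omega a zero := rfl

theorem insert_omega (a b c : T) :
    T.insert a (omega b c) = if Lt a b then omega b (T.insert a c) else omega a (omega b c) := rfl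

theorem insert_comm (a b : T) : ∀ c : T, T.insert a (T.insert b c) = T.insert b (T.insert a c) := by
  intro c
  induction c with
  | zero =>
    rcases lt_total a b with h | rfl | h
    · simp [insert_zero, insert_omega, h, lt_asymm h]
    · simp [insert_zero, insert_omega, lt_irrefl a]
    · simp [insert_zero, insert_omega, h, lt_asymm h]
  | omega d e ihd ihe =>
    by_cases hbd : Lt b d <;> by_cases had : Lt a d
    · simp [insert_omega, hbd, had, ihe]
    · have hba : Lt b a := by
        rcases not_lt_iff.mp had with h | rfl
        · exact lt_trans hbd h
        · exact hbd
      simp [insert_omega, hbd, had, hba, lt_asymm hba]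
    · have hab : Lt a b := by
        rcases not_lt_iff.mp hbd with h | rfl
        · exact lt_trans had h
        · exact had
      simp [insert_omega, hbd, had, hab, lt_asymm hab]
    · by_cases hab : Lt a b
      · simp [insert_omega, hbd, had, hab, lt_asymm hab]
      · rcases not_lt_iff.mp hab with hba | rfl
        · simp [insert_omega, hbd, had, hba, lt_asymm hba]
        · simp [insert_omega, hbd, had, lt_irrefl a]

theorem norm_eq_of_perm {s t : T} (h : Perm s t) : norm s = norm t := by
  induction h with
  | refl => rfl
  | symm _ ih => exact ih.symm
  | trans _ _ ih1 ih2 => exact ih1.trans ih2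
  | congr _ _ ih1 ih2 => show T.insert _ _ = T.insert _ _; rw [ih1, ih2]
  | swap a b c =>
    show T.insert (norm a) (T.insert (norm b) (norm c))
       = T.insert (norm b) (T.insert (norm a) (norm c))
    exact insert_comm _ _ _

end CNFOrd.T

open CNFOrd T in
/-- the map sending a tree in Cantor normal form to its `~`-equivalence
class is a bijection between `{t : T // isCNF t}` and the quotient `T ⧸ ~`. -/
theorem cnf_quotient_bijective :
    Function.Bijective
      (fun x : {t : T // isCNF t} => (⟦x.val⟧ : Quotient permSetoid)) := by
  constructor
  · rintro ⟨x, hx⟩ ⟨y, hy⟩ h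
    have hp : Perm x y := Quotient.exact h
    have := norm_eq_of_perm hp
    rw [norm_eq_of_cnf hx, norm_eq_of_cnf hy] at this
    exact Subtype.ext this
  · intro q
    induction q using Quotient.ind with
    | _ t => exact ⟨⟨norm t, norm_cnf t⟩, Quotient.sound (norm_perm t)⟩
end

section
/- Every pseudo-descending sequence of Cantor normal forms is eventually zero (Theorem 5.3): for every f : ℕ → {t : Tree // isCNF t}, if for every i either f (i+1) < f i, or f i = 0 and f (i+1) = 0, then there exists n such that f i = 0 for all i ≥ n. -/
section Proof

open CNFOrd T Ordinal

noncomputable def ev : T → Ordinal.{0}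
  | .zero => 0
  | .omega a b => omega0 ^ ev a + ev b

def sz : T → ℕ
  | .zero => 1
  | .omega a b => sz a + sz b + 1

lemma not_Lt_zero (x : T) : ¬ Lt x T.zero := fun h => nomatch h

lemma sz_pos (t : T) : 1 ≤ sz t := by cases t <;> simp [sz]

lemma sz_fst_le (t : T) : sz (fst t) ≤ sz t := by
  cases t with
  | zero => simp [fst]
  | omega a b => simp [fst, sz]; omega

lemma isCNF_fst {t : T} (h : isCNF t) : isCNF (fst t) := by
  cases h with
  | zero => exact isCNF.zero
  | omega ha hb hg => exact ha

lemma ev_lt_opow_add_one {e x : Ordinal} (h : x < omega0 ^ (e + 1)) :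
    omega0 ^ e + x < omega0 ^ (e + 1) := by
  have : omega0 ^ e + x < omega0 ^ e + omega0 ^ (e + 1) :=
    (add_lt_add_iff_left _).2 h
  refine this.trans_le (le_of_eq ?_)
  rw [add_one_eq_succ, opow_succ]
  calc omega0 ^ e + omega0 ^ e * omega0
      = omega0 ^ e * 1 + omega0 ^ e * omega0 := by rw [mul_one]
    _ = omega0 ^ e * (1 + omega0) := by rw [mul_add]
    _ = omega0 ^ e * omega0 := by rw [one_add_omega0]

lemma key : ∀ n : ℕ,
    (∀ t, sz t ≤ n → isCNF t → ev t < omega0 ^ (ev (fst t) + 1)) ∧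
    (∀ a b, sz a + sz b ≤ n → isCNF a → isCNF b → Lt a b → ev a < ev b) := by
  intro n
  induction n using Nat.strong_induction_on with
  | _ n ih =>
    constructor
    · intro t hsz hcnf
      cases hcnf with
      | zero =>
        simp only [ev, fst]
        exact opow_pos _ omega0_pos
      | @omega a b ha hb hg =>
        simp only [ev, fst]
        have hszb : sz b < n := by have := sz_pos a; simp [sz] at hsz; omega
        have hbnd : ev b < omega0 ^ (ev (fst b) + 1) :=
          (ih (sz b) hszb).1 b (le_refl _) hb
        have hfle : ev (fst b) ≤ ev a := by
          rcases hg with hlt | heq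
          · have hm : sz (fst b) + sz a < n := by
              have h1 := sz_fst_le b
              simp [sz] at hsz; omega
            exact le_of_lt ((ih _ hm).2 (fst b) a (le_refl _)
              (isCNF_fst hb) ha hlt)
          · rw [heq]
        have : ev b < omega0 ^ (ev a + 1) :=
          hbnd.trans_le (opow_le_opow_right omega0_pos (by
            exact add_le_add_left hfle 1))
        exact ev_lt_opow_add_one this
    · intro a b hsz ha hb hlt
      cases hlt with
      | @lt1 c d =>
        simp only [ev]
        exact lt_of_lt_of_le (opow_pos _ omega0_pos) le_self_add
      | @lt2 p q r s h =>
        cases ha with | omega hp hq hgp =>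
        cases hb with | omega hr hs hgr =>
        have h1 : sz (omega p q) < n := by
          have := sz_pos r; have := sz_pos s; simp [sz] at hsz ⊢; omega
        have hbnd : ev (omega p q) < omega0 ^ (ev p + 1) :=
          (ih _ h1).1 (omega p q) (le_refl _) (isCNF.omega hp hq hgp)
        have h2 : sz p + sz r < n := by
          have := sz_pos q; have := sz_pos s; simp [sz] at hsz; omega
        have hpr : ev p < ev r := (ih _ h2).2 p r (le_refl _) hp hr h
        have : omega0 ^ (ev p + 1) ≤ omega0 ^ ev r := by
          apply opow_le_opow_right omega0_pos
          rw [add_one_eq_succ]; exact Order.succ_le_of_lt hpr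
        calc ev (omega p q) < omega0 ^ (ev p + 1) := hbnd
          _ ≤ omega0 ^ ev r := this
          _ ≤ ev (omega r s) := le_self_add
      | @lt3 p q r s he h =>
        cases ha with | omega hp hq hgp =>
        cases hb with | omega hr hs hgr =>
        subst he
        have h2 : sz q + sz s < n := by
          have := sz_pos p; simp [sz] at hsz; omega
        have := (ih _ h2).2 q s (le_refl _) hq hs h
        simp only [ev]
        exact (add_lt_add_iff_left _).2 this

lemma ev_mono {a b : T} (ha : isCNF a) (hb : isCNF b) (h : Lt a b) :
    ev a < ev b :=
  (key (sz a + sz b)).2 a b (le_refl _) ha hb h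

end Proof

open CNFOrd T in
/-- every pseudo-descending sequence of Cantor normal forms is
eventually zero. -/
theorem pseudo_descending_eventually_zero :
    ∀ f : ℕ → {t : T // isCNF t},
      (∀ i, Lt (f (i + 1)).val (f i).val ∨
        ((f i).val = T.zero ∧ (f (i + 1)).val = T.zero)) →
      ∃ n, ∀ i, n ≤ i → (f i).val = T.zero := by
  intro f h
  have step : ∀ i, (f i).val = T.zero → (f (i + 1)).val = T.zero := by
    intro i hi
    rcases h i with hlt | ⟨_, h2⟩
    · rw [hi] at hlt; exact absurd hlt (not_Lt_zero _)
    · exact h2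
  by_cases hz : ∃ n, (f n).val = T.zero
  · obtain ⟨n, hn⟩ := hz
    refine ⟨n, ?_⟩
    intro i hi
    induction i, hi using Nat.le_induction with
    | base => exact hn
    | succ j _ ih2 => exact step j ih2
  · push_neg at hz
    exfalso
    have hd : ∀ i, Lt (f (i + 1)).val (f i).val := fun i =>
      (h i).resolve_right (fun h2 => hz i h2.1)
    set g : ℕ → Ordinal := fun i => ev (f i).val with hgdef
    have hg : ∀ i, g (i + 1) < g i := fun i =>
      ev_mono (f (i + 1)).2 (f i).2 (hd i)
    have hne : (Set.range g).Nonempty := ⟨g 0, 0, rfl⟩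
    obtain ⟨i, hi⟩ := Ordinal.lt_wf.min_mem (Set.range g) hne
    exact Ordinal.lt_wf.not_lt_min (Set.range g) ⟨i + 1, rfl⟩ (hi ▸ hg i)
end

section
/- There is no strictly descending sequence of Cantor normal forms (Corollary 5.4): there is no f : ℕ → {t : Tree // isCNF t} such that f (i+1) < f i for every i. -/
namespace CNFHelp
open CNFOrd CNFOrd.T Ordinal

noncomputable def ev : T → Ordinal.{0}
  | T.zero => 0
  | T.omega a b => ω ^ ev a + ev b

def sz : T → ℕ
  | T.zero => 1
  | T.omega a b => sz a + sz b + 1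

theorem main : ∀ n : ℕ,
    (∀ s t : T, sz s + sz t ≤ n → isCNF s → isCNF t → Lt s t → ev s < ev t) ∧
    (∀ t : T, sz t ≤ n → isCNF t → ev t < ω ^ (ev (fst t) + 1)) := by
  intro n
  induction n using Nat.strong_induction_on with
  | _ n IH =>
    have szpos : ∀ t : T, 0 < sz t := by
      intro t; cases t <;> simp [sz]
    constructor
    · intro s t hn hs ht h
      cases h with
      | lt1 =>
        simp only [ev]
        exact lt_of_lt_of_le (opow_pos _ omega0_pos) (le_add_right le_rfl)
      | @lt2 a b c d hac =>
        simp only [ev]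
        cases hs with
        | omega ha hb hge =>
        cases ht with
        | omega hc hd _ =>
        have hsz : sz (T.omega a b) < n := by
          have := szpos (T.omega c d); simp [sz] at hn ⊢; omega
        have hbound : ev (T.omega a b) < ω ^ (ev a + 1) :=
          (IH _ hsz).2 _ le_rfl (isCNF.omega ha hb hge)
        have hac' : ev a < ev c := by
          refine (IH (n - 1) (by omega)).1 a c ?_ ha hc hac
          simp [sz] at hn ⊢; omega
        calc ev (T.omega a b) < ω ^ (ev a + 1) := hbound
          _ ≤ ω ^ ev c := opow_le_opow_right omega0_pos (Order.add_one_le_of_lt hac')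
          _ ≤ ω ^ ev c + ev d := le_add_right le_rfl
      | @lt3 a b c d he hbd =>
        subst he
        simp only [ev]
        cases hs with
        | omega ha hb _ =>
        cases ht with
        | omega _ hd _ =>
        have : ev b < ev d := by
          refine (IH (n - 1) ?_).1 b d ?_ hb hd hbd
          · have := szpos b; have := szpos d; simp [sz] at hn; omega
          · simp [sz] at hn; omega
        exact add_lt_add_right this _
    · intro t hn ht
      cases ht with
      | zero => exact opow_pos _ omega0_pos
      | @omega a b ha hb hge =>
        simp only [ev, fst]
        have h1 : ω ^ ev a < ω ^ (ev a + 1) :=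
          (opow_lt_opow_iff_right one_lt_omega0).2 (lt_add_one _)
        have h2 : ev b < ω ^ (ev a + 1) := by
          have hbb : ev b < ω ^ (ev (fst b) + 1) := by
            refine (IH (n - 1) ?_).2 b ?_ hb
            · have := szpos a; have := szpos b; simp [sz] at hn; omega
            · simp [sz] at hn; omega
          refine lt_of_lt_of_le hbb (opow_le_opow_right omega0_pos ?_)
          cases hge with
          | inl hlt =>
            have hfb : isCNF (fst b) := by
              cases hb with
              | zero => exact isCNF.zero
              | omega h _ _ => exact h
            have : ev (fst b) < ev a := by
              refine (IH (n - 1) ?_).1 _ _ ?_ hfb ha hlt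
              · have := szpos a; have := szpos b; simp [sz] at hn; omega
              · have hle : sz (fst b) ≤ sz b := by
                  cases b <;> simp [sz, fst] <;> omega
                simp [sz] at hn; omega
            exact add_le_add_left this.le 1
          | inr he => rw [he]
        exact principal_add_omega0_opow _ h1 h2

theorem mono {s t : T} (hs : isCNF s) (ht : isCNF t) (h : Lt s t) : ev s < ev t :=
  (main (sz s + sz t)).1 s t le_rfl hs ht h

end CNFHelp

open CNFOrd T in
/-- there is no strictly descending sequence of Cantor normal forms. -/
theorem no_strictly_descending :
    ¬ ∃ f : ℕ → {t : T // isCNF t}, ∀ i, Lt (f (i + 1)).val (f i).val := by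
  rintro ⟨f, hf⟩
  have h : ∀ i, CNFHelp.ev (f (i + 1)).val < CNFHelp.ev (f i).val :=
    fun i => CNFHelp.mono (f (i + 1)).2 (f i).2 (hf i)
  obtain ⟨_, ⟨n, rfl⟩, hmin⟩ :=
    Ordinal.lt_wf.has_min (Set.range fun i => CNFHelp.ev (f i).val) ⟨_, 0, rfl⟩
  exact hmin _ ⟨n + 1, rfl⟩ (h n)
end
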